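/- Let E_1,…,E_K be independent random variables on a probability space, with E_k exponentially distributed with rate y_k for each k. Then for every k ∈ {1,…,K}, the probability that there exists an item i with u_{k,i} > 0 such that (y_k/u_{k,i})·E_k ≤ (y_{k'}/u_{k',i})·E_{k'} for every k' ≠ k with u_{k',i} > 0, is at most (1 + ln q)·y_k. (This is the guarantee that the dilated-opening-times rounding scheme uses each fulfillment center k with probability at most (1 + ln q)·y_k.) -/

import Mathlib

open MeasureTheory ProbabilityTheory Real

open Set

lemma expMeasure_eq_withDensity (r : ℝ) :
    expMeasure r = volume.withDensity (exponentialPDF r) := rfl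

lemma expMeasure_apply (r : ℝ) {s : Set ℝ} (hs : MeasurableSet s) :
    expMeasure r s = ∫⁻ x in s, exponentialPDF r x := by
  rw [expMeasure_eq_withDensity, withDensity_apply _ hs]

lemma expMeasure_Iic {r x : ℝ} (hr : 0 < r) (hx : 0 ≤ x) :
    expMeasure r (Iic x) = ENNReal.ofReal (1 - exp (-(r * x))) := by
  rw [expMeasure_apply r measurableSet_Iic, lintegral_exponentialPDF_eq_antiDeriv hr x, if_pos hx]

lemma expMeasure_Ioi {r x : ℝ} (hr : 0 < r) (hx : 0 ≤ x) :
    expMeasure r (Ioi x) = ENNReal.ofReal (exp (-(r * x))) := by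
  have : IsProbabilityMeasure (expMeasure r) := isProbabilityMeasure_expMeasure hr
  have h1 : expMeasure r (Ioi x) = 1 - expMeasure r (Iic x) := by
    rw [← compl_Iic, measure_compl measurableSet_Iic (measure_ne_top _ _), measure_univ]
  rw [h1, expMeasure_Iic hr hx, ENNReal.ofReal_sub _ (exp_nonneg _), ENNReal.ofReal_one,
    ENNReal.sub_sub_cancel ENNReal.one_ne_top
      (ENNReal.ofReal_le_one.mpr (exp_le_one_iff.mpr (neg_nonpos.mpr (mul_nonneg hr.le hx))))]

lemma expMeasure_Ici {r x : ℝ} (hr : 0 < r) (hx : 0 ≤ x) :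
    expMeasure r (Ici x) = ENNReal.ofReal (exp (-(r * x))) := by
  have h0 : expMeasure r {x} = 0 :=
    withDensity_absolutelyContinuous volume (exponentialPDF r) (volume_singleton)
  rw [← expMeasure_Ioi hr hx]
  refine le_antisymm ?_ (measure_mono Ioi_subset_Ici_self)
  calc expMeasure r (Ici x) ≤ expMeasure r (Ioi x ∪ {x}) := by rw [Ioi_union_left]
    _ ≤ expMeasure r (Ioi x) + expMeasure r {x} := measure_union_le _ _
    _ = expMeasure r (Ioi x) := by rw [h0, add_zero]

lemma measurable_exponentialPDF (r : ℝ) : Measurable (exponentialPDF r) :=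
  (measurable_exponentialPDFReal r).ennreal_ofReal

lemma key_tail {Ω : Type*} [MeasurableSpace Ω] {μ : Measure Ω} [IsProbabilityMeasure μ]
    {K : ℕ} (E : Fin K → Ω → ℝ) (hmeas : ∀ k, Measurable (E k))
    (hindep : iIndepFun E μ)
    (y : Fin K → ℝ) (hy_pos : ∀ k, 0 < y k)
    (hlaw : ∀ k, μ.map (E k) = expMeasure (y k))
    (k : Fin K) (T : Finset (Fin K)) (hkT : k ∉ T)
    (α : Fin K → ℝ) (hα : ∀ j, 0 ≤ α j)
    (τ : ℝ) (hτ : 0 ≤ τ) (β : ℝ) (hβ : β = ∑ j ∈ T, y j * α j) :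
    μ {ω | τ < E k ω ∧ ∀ j ∈ T, α j * E k ω ≤ E j ω}
      = ENNReal.ofReal (y k / (y k + β)) * ENNReal.ofReal (exp (-((y k + β) * τ))) := by
  classical
  have hβ0 : 0 ≤ β := hβ ▸ Finset.sum_nonneg fun j _ => mul_nonneg (hy_pos j).le (hα j)
  have hyβ : 0 < y k + β := by linarith [hy_pos k]
  -- the tuple of the other variables
  set h : Ω → (T → ℝ) := fun ω j => E j ω with hh
  have hmh : Measurable h := measurable_pi_lambda _ fun j => hmeas j
  have hEk_h : IndepFun (E k) h μ := by
    have h1 := hindep.indepFun_finset {k} T (Finset.disjoint_singleton_left.mpr hkT) hmeas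
    exact h1.comp (φ := fun v : (({k} : Finset (Fin K)) → ℝ) => v ⟨k, Finset.mem_singleton_self k⟩)
      (ψ := id) (measurable_pi_apply _) measurable_id
  have hmap : μ.map (fun ω => (E k ω, h ω)) = (expMeasure (y k)).prod (μ.map h) := by
    rw [← hlaw k]
    exact (indepFun_iff_map_prod_eq_prod_map_map (hmeas k).aemeasurable hmh.aemeasurable).mp hEk_h
  set C : Set (ℝ × (T → ℝ)) := {p | τ < p.1 ∧ ∀ j : T, α j * p.1 ≤ p.2 j} with hCdef
  have hC : MeasurableSet C := by
    have h1 : MeasurableSet {p : ℝ × (T → ℝ) | τ < p.1} :=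
      measurableSet_lt measurable_const measurable_fst
    have h2 : MeasurableSet {p : ℝ × (T → ℝ) | ∀ j : T, α j * p.1 ≤ p.2 j} := by
      rw [setOf_forall]
      exact MeasurableSet.iInter fun j =>
        measurableSet_le (measurable_fst.const_mul (α j))
          ((measurable_pi_apply j).comp measurable_snd)
    exact h1.inter h2
  have hpre : {ω | τ < E k ω ∧ ∀ j ∈ T, α j * E k ω ≤ E j ω}
      = (fun ω => (E k ω, h ω)) ⁻¹' C := by
    ext ω
    simp only [hCdef, mem_setOf_eq, mem_preimage, Subtype.forall, hh]
  rw [hpre, ← Measure.map_apply ((hmeas k).prodMk hmh) hC, hmap, Measure.prod_apply hC]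
  have hslice : ∀ t : ℝ, (μ.map h) (Prod.mk t ⁻¹' C)
      = (Ioi τ).indicator (fun t => ENNReal.ofReal (exp (-(β * t)))) t := by
    intro t
    by_cases ht : τ < t
    · rw [Set.indicator_of_mem (show t ∈ Ioi τ from ht)]
      have ht0 : 0 ≤ t := hτ.trans ht.le
      have hCt : Prod.mk t ⁻¹' C = ⋂ j : T, (fun r : T → ℝ => r j) ⁻¹' Ici (α j * t) := by
        ext r
        simp [hCdef, ht, mem_iInter]
      rw [hCt, Measure.map_apply hmh
        (MeasurableSet.iInter fun j => (measurable_pi_apply j) measurableSet_Ici)]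
      have hpre2 : h ⁻¹' (⋂ j : T, (fun r : T → ℝ => r j) ⁻¹' Ici ((α j) * t))
          = ⋂ j ∈ T, E j ⁻¹' Ici (α j * t) := by
        ext ω
        simp [hh, mem_iInter, Subtype.forall]
      rw [hpre2, hindep.measure_inter_preimage_eq_mul T (fun j _ => measurableSet_Ici)]
      have hfac : ∀ j ∈ T, μ (E j ⁻¹' Ici (α j * t)) = ENNReal.ofReal (exp (-(y j * (α j * t)))) := by
        intro j _
        rw [← Measure.map_apply (hmeas j) measurableSet_Ici, hlaw j,
          expMeasure_Ici (hy_pos j) (mul_nonneg (hα j) ht0)]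
      rw [Finset.prod_congr rfl hfac, ← ENNReal.ofReal_prod_of_nonneg fun j _ => (exp_nonneg _),
        ← Real.exp_sum]
      congr 2
      rw [hβ, Finset.sum_mul, ← Finset.sum_neg_distrib]
      exact Finset.sum_congr rfl fun j _ => by ring
    · rw [Set.indicator_of_notMem (show t ∉ Ioi τ from ht)]
      have : Prod.mk t ⁻¹' C = ∅ := by
        ext r; simp [hCdef, ht]
      rw [this, measure_empty]
  rw [lintegral_congr hslice, lintegral_indicator measurableSet_Ioi _,
    expMeasure_eq_withDensity, restrict_withDensity measurableSet_Ioi,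
    lintegral_withDensity_eq_lintegral_mul _ (measurable_exponentialPDF _)
      ((by fun_prop : Measurable fun t : ℝ => rexp (-(β * t))).ennreal_ofReal)]
  have hpt : ∀ t ∈ Ioi τ,
      (exponentialPDF (y k) * fun t => ENNReal.ofReal (rexp (-(β * t)))) t
        = ENNReal.ofReal (y k / (y k + β)) * exponentialPDF (y k + β) t := by
    intro t ht
    have ht0 : 0 ≤ t := hτ.trans (le_of_lt ht)
    simp only [Pi.mul_apply]
    rw [exponentialPDF_of_nonneg ht0, exponentialPDF_of_nonneg ht0,
      ← ENNReal.ofReal_mul (mul_nonneg (hy_pos k).le (exp_nonneg _)),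
      ← ENNReal.ofReal_mul (le_of_lt (div_pos (hy_pos k) hyβ))]
    congr 1
    have he : rexp (-(y k * t)) * rexp (-(β * t)) = rexp (-((y k + β) * t)) := by
      rw [← Real.exp_add]; ring_nf
    calc y k * rexp (-(y k * t)) * rexp (-(β * t))
        = y k * rexp (-((y k + β) * t)) := by rw [mul_assoc, he]
      _ = y k / (y k + β) * ((y k + β) * rexp (-((y k + β) * t))) := by
          field_simp
  rw [setLIntegral_congr_fun measurableSet_Ioi hpt,
    lintegral_const_mul _ (measurable_exponentialPDF _),
    ← expMeasure_apply _ measurableSet_Ioi, expMeasure_Ioi hyβ hτ]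


/-- the dilated-opening-times rounding scheme uses each FC `k`
(i.e. some item sees `k` open weakly first) with probability at most `(1 + ln q)·y k`. -/
theorem stmt_2
    {Ω : Type*} [MeasurableSpace Ω] {μ : Measure Ω} [IsProbabilityMeasure μ]
    (q K : ℕ) (hq : 0 < q) (hK : 0 < K)
    (u : Fin K → Fin q → ℝ) (hu_nonneg : ∀ k i, 0 ≤ u k i)
    (hu_sum : ∀ i, ∑ k, u k i = 1)
    (y : Fin K → ℝ)
    (hy : ∀ k, y k = Finset.univ.sup' (Finset.univ_nonempty_iff.mpr ⟨⟨0, hq⟩⟩) (u k))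
    (hy_pos : ∀ k, 0 < y k)
    (E : Fin K → Ω → ℝ) (hmeas : ∀ k, Measurable (E k))
    (hindep : iIndepFun E μ)
    (hlaw : ∀ k, μ.map (E k) = expMeasure (y k))
    (k : Fin K) :
    μ {ω | ∃ i, 0 < u k i ∧ ∀ k', k' ≠ k → 0 < u k' i →
        (y k / u k i) * E k ω ≤ (y k' / u k' i) * E k' ω}
      ≤ ENNReal.ofReal ((1 + Real.log q) * y k) := by
  classical
  set τ := Real.log q with hτdef
  have hq1 : (1:ℝ) ≤ (q:ℝ) := by exact_mod_cast hq
  have hτ0 : 0 ≤ τ := Real.log_nonneg hq1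
  have hyk : 0 < y k := hy_pos k
  have huky : ∀ i, u k i ≤ y k := fun i => (hy k) ▸ Finset.le_sup' (u k) (Finset.mem_univ i)
  set I : Finset (Fin q) := Finset.univ.filter (fun i => 0 < u k i) with hI
  set Bset : Fin q → Set Ω := fun i =>
    {ω | τ < E k ω ∧ ∀ j ∈ Finset.univ.filter (fun j => j ≠ k ∧ 0 < u j i),
      (y k * u j i / (u k i * y j)) * E k ω ≤ E j ω} with hB
  have hsub : {ω | ∃ i, 0 < u k i ∧ ∀ k', k' ≠ k → 0 < u k' i →
        (y k / u k i) * E k ω ≤ (y k' / u k' i) * E k' ω}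
      ⊆ (E k ⁻¹' Iic τ) ∪ ⋃ i ∈ I, Bset i := by
    rintro ω ⟨i, hui, hall⟩
    by_cases hEτ : E k ω ≤ τ
    · exact Or.inl hEτ
    · refine Or.inr (Set.mem_biUnion (Finset.mem_filter.mpr ⟨Finset.mem_univ i, hui⟩) ?_)
      refine ⟨lt_of_not_ge hEτ, fun j hj => ?_⟩
      obtain ⟨-, hjk, huj⟩ := Finset.mem_filter.mp hj
      have h1 := hall j hjk huj
      have hyj := hy_pos j
      have h2 := mul_le_mul_of_nonneg_left h1 (le_of_lt (div_pos huj hyj))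
      calc (y k * u j i / (u k i * y j)) * E k ω
          = (u j i / y j) * ((y k / u k i) * E k ω) := by ring
        _ ≤ (u j i / y j) * ((y j / u j i) * E j ω) := h2
        _ = E j ω := by field_simp
  refine le_trans (measure_mono hsub) (le_trans (measure_union_le _ _) ?_)
  have h1 : μ (E k ⁻¹' Iic τ) ≤ ENNReal.ofReal (y k * τ) := by
    rw [← Measure.map_apply (hmeas k) measurableSet_Iic, hlaw k, expMeasure_Iic hyk hτ0]
    apply ENNReal.ofReal_le_ofReal
    nlinarith [Real.add_one_le_exp (-(y k * τ))]
  have h2 : ∀ i ∈ I, μ (Bset i) ≤ ENNReal.ofReal (u k i * (1/(q:ℝ))) := by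
    intro i hiI
    have hui : 0 < u k i := (Finset.mem_filter.mp hiI).2
    set T := Finset.univ.filter (fun j => j ≠ k ∧ 0 < u j i) with hT
    have hkT : k ∉ T := by simp [hT]
    set α : Fin K → ℝ := fun j => y k * u j i / (u k i * y j) with hα
    have hα0 : ∀ j, 0 ≤ α j := fun j =>
      div_nonneg (mul_nonneg hyk.le (hu_nonneg j i)) (mul_nonneg hui.le (hy_pos j).le)
    have hsumT : ∑ j ∈ T, u j i = 1 - u k i := by
      have h3 : ∑ j ∈ Finset.univ.erase k, u j i = 1 - u k i := by
        rw [Finset.sum_erase_eq_sub (Finset.mem_univ k), hu_sum i]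
      rw [← h3]
      apply Finset.sum_subset
      · intro j hj
        rw [hT] at hj
        obtain ⟨-, hjk, -⟩ := Finset.mem_filter.mp hj
        exact Finset.mem_erase.mpr ⟨hjk, Finset.mem_univ j⟩
      · intro j hj hjT
        have hjk : j ≠ k := (Finset.mem_erase.mp hj).1
        rw [hT] at hjT
        simp only [Finset.mem_filter, Finset.mem_univ, true_and, not_and] at hjT
        have := hjT hjk
        linarith [hu_nonneg j i]
    set β := (∑ j ∈ T, y j * α j) with hβ
    have hβval : β = y k / u k i * (1 - u k i) := by
      rw [hβ]
      have hterm : ∀ j ∈ T, y j * α j = (y k / u k i) * u j i := by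
        intro j _
        rw [hα]
        have : y j ≠ 0 := (hy_pos j).ne'
        field_simp
      rw [Finset.sum_congr rfl hterm, ← Finset.mul_sum, hsumT]
    have hykβ : y k + β = y k / u k i := by
      rw [hβval]; field_simp; ring
    have hkey := key_tail E hmeas hindep y hy_pos hlaw k T hkT α hα0 τ hτ0 β rfl
    have hBeq : Bset i = {ω | τ < E k ω ∧ ∀ j ∈ T, α j * E k ω ≤ E j ω} := rfl
    rw [hBeq, hkey, hykβ]
    have e1 : y k / (y k / u k i) = u k i := by
      field_simp
    rw [e1, ← ENNReal.ofReal_mul hui.le]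
    apply ENNReal.ofReal_le_ofReal
    apply mul_le_mul_of_nonneg_left _ hui.le
    have h4 : 1 ≤ y k / u k i := (one_le_div hui).mpr (huky i)
    calc rexp (-(y k / u k i * τ))
        ≤ rexp (-(1 * τ)) := Real.exp_le_exp.mpr (by nlinarith)
      _ = 1/(q:ℝ) := by
          rw [one_mul, Real.exp_neg, Real.exp_log (by positivity), one_div]
  have h3 : μ (⋃ i ∈ I, Bset i) ≤ ENNReal.ofReal (y k) := by
    refine le_trans (measure_biUnion_finset_le I Bset) ?_
    refine le_trans (Finset.sum_le_sum h2) ?_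
    rw [← ENNReal.ofReal_sum_of_nonneg fun i _ =>
      mul_nonneg (hu_nonneg k i) (by positivity)]
    apply ENNReal.ofReal_le_ofReal
    calc ∑ i ∈ I, u k i * (1/(q:ℝ))
        ≤ ∑ i : Fin q, u k i * (1/(q:ℝ)) := by
          apply Finset.sum_le_sum_of_subset_of_nonneg (Finset.subset_univ I)
          intro i _ _
          exact mul_nonneg (hu_nonneg k i) (by positivity)
      _ ≤ ∑ _i : Fin q, y k * (1/(q:ℝ)) := by
          apply Finset.sum_le_sum
          intro i _
          apply mul_le_mul_of_nonneg_right (huky i) (by positivity)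
      _ = y k := by
          rw [Finset.sum_const, Finset.card_univ, Fintype.card_fin, nsmul_eq_mul]
          field_simp
  calc μ (E k ⁻¹' Iic τ) + μ (⋃ i ∈ I, Bset i)
      ≤ ENNReal.ofReal (y k * τ) + ENNReal.ofReal (y k) := add_le_add h1 h3
    _ = ENNReal.ofReal ((1 + τ) * y k) := by
        rw [← ENNReal.ofReal_add (by positivity) hyk.le]
        congr 1
        ring
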